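/- Let X be an arithmetic L-space. The following are equivalent: (i) Y_d is an antichain; (ii) max Y = Y_d; (iii) Y_d, topologized so that its open sets are exactly the traces U ∩ Y_d of clopen upsets U of X, is a locally Stone space (zero-dimensional, locally compact, and Hausdorff). -/

import Mathlib

open Set Topology

variable {X : Type*} [TopologicalSpace X] [PartialOrder X]

/-- The downward closure `↓A` of a subset of a poset. -/
def dwC (A : Set X) : Set X := {x : X | ∃ a ∈ A, x ≤ a}

/-- The upward closure `↑A` of a subset of a poset. -/
def upC (A : Set X) : Set X := {x : X | ∃ a ∈ A, a ≤ x}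

/-- The set of maximal points of a subset of a poset. -/
def maxOf (A : Set X) : Set X := {x ∈ A | ∀ z ∈ A, x ≤ z → z = x}

/-- The set of minimal points of a subset of a poset. -/
def minOf (A : Set X) : Set X := {x ∈ A | ∀ z ∈ A, z ≤ x → z = x}

/-- A Priestley space: compact with the Priestley separation axiom. -/
def IsPriestley (X : Type*) [TopologicalSpace X] [PartialOrder X] : Prop :=
  CompactSpace X ∧
    ∀ x y : X, ¬x ≤ y → ∃ U : Set X, IsClopen U ∧ IsUpperSet U ∧ x ∈ U ∧ y ∉ U

/-- An L-space: a Priestley space where the closure of every open upset is an open upset. -/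
def IsLSpace (X : Type*) [TopologicalSpace X] [PartialOrder X] : Prop :=
  IsPriestley X ∧
    ∀ U : Set X, IsOpen U → IsUpperSet U → IsOpen (closure U) ∧ IsUpperSet (closure U)

/-- The set `Y` of localic points: those `y` with `↓y` clopen. -/
def localicPts (X : Type*) [TopologicalSpace X] [PartialOrder X] : Set X :=
  {y : X | IsClopen (dwC ({y} : Set X))}

/-- A Scott upset: a closed upset whose minimal points are localic. -/
def IsScottUp (F : Set X) : Prop :=
  IsClosed F ∧ IsUpperSet F ∧ minOf F ⊆ localicPts X

/-- The collection of clopen Scott upsets of `X`. -/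
def ClopSUp (X : Type*) [TopologicalSpace X] [PartialOrder X] : Set (Set X) :=
  {U : Set X | IsClopen U ∧ IsScottUp U}

/-- The core of a clopen upset: the union of the clopen Scott upsets inside it. -/
def coreC (U : Set X) : Set X := ⋃₀ {V : Set X | V ∈ ClopSUp X ∧ V ⊆ U}

/-- An algebraic L-space: the core of each clopen upset is dense in it. -/
def IsAlgebraicLSpace (X : Type*) [TopologicalSpace X] [PartialOrder X] : Prop :=
  IsLSpace X ∧ ∀ U : Set X, IsClopen U → IsUpperSet U → U ⊆ closure (coreC U)

/-- An arithmetic L-space: an algebraic L-space in which the intersection of any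
two clopen Scott upsets is again a Scott upset. -/
def IsArithmeticLSpace (X : Type*) [TopologicalSpace X] [PartialOrder X] : Prop :=
  IsAlgebraicLSpace X ∧
    ∀ U V : Set X, U ∈ ClopSUp X → V ∈ ClopSUp X → IsScottUp (U ∩ V)

/-- A nuclear subset of an L-space. -/
def IsNuclearSub (N : Set X) : Prop :=
  IsClosed N ∧ ∀ U : Set X, IsClopen U → IsClopen (dwC (U ∩ N))

/-- The nucleus `j_N` associated to a nuclear subset: `j_N U = X \ ↓(N \ U)`. -/
def jN (N U : Set X) : Set X := (dwC (N \ U))ᶜ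

/-- A nuclear subset is inductive if `↑(F ∩ N)` is a Scott upset for every Scott upset `F`. -/
def IsInductiveNuclear (N : Set X) : Prop :=
  ∀ F : Set X, IsScottUp F → IsScottUp (upC (F ∩ N))

/-- The pseudocomplement `V* = X \ ↓V`. -/
def starC (V : Set X) : Set X := (dwC V)ᶜ

/-- The `d`-nucleus on clopen upsets: `d U = cl ⋃ {V** : V ∈ ClopSUp X, V ⊆ U}`. -/
def dOp (U : Set X) : Set X :=
  closure (⋃₀ {W : Set X | ∃ V ∈ ClopSUp X, V ⊆ U ∧ W = starC (starC V)})

/-- The `d`-core: `core_d U = ⋃ {d V : V ∈ ClopSUp X, V ⊆ U}`. -/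
def coreD (U : Set X) : Set X :=
  ⋃₀ {W : Set X | ∃ V ∈ ClopSUp X, V ⊆ U ∧ W = dOp V}

/-- The topology on a subset `S ⊆ X` whose opens are (generated by) the traces of
clopen upsets of `X`. -/
def traceTop (S : Set X) : TopologicalSpace S :=
  TopologicalSpace.generateFrom
    {V : Set S | ∃ U : Set X, IsClopen U ∧ IsUpperSet U ∧ V = Subtype.val ⁻¹' U}

set_option linter.unusedSectionVars false
namespace S13


lemma mem_dwC {A : Set X} {x : X} : x ∈ dwC A ↔ ∃ a ∈ A, x ≤ a := Iff.rfl

lemma dwC_lower {A : Set X} : IsLowerSet (dwC A) := by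
  rintro a b hba ⟨c, hc, hac⟩; exact ⟨c, hc, hba.trans hac⟩

lemma dwC_mono {A B : Set X} (h : A ⊆ B) : dwC A ⊆ dwC B := by
  rintro x ⟨a, ha, hxa⟩; exact ⟨a, h ha, hxa⟩

lemma subset_dwC {A : Set X} : A ⊆ dwC A := fun a ha => ⟨a, ha, le_refl _⟩

lemma dwC_union {A B : Set X} : dwC (A ∪ B) = dwC A ∪ dwC B := by
  ext x; constructor
  · rintro ⟨a, ha | ha, hxa⟩
    · exact Or.inl ⟨a, ha, hxa⟩
    · exact Or.inr ⟨a, ha, hxa⟩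
  · rintro (⟨a, ha, hxa⟩ | ⟨a, ha, hxa⟩)
    · exact ⟨a, Or.inl ha, hxa⟩
    · exact ⟨a, Or.inr ha, hxa⟩

@[simp] lemma dwC_empty : dwC (∅ : Set X) = ∅ := by
  ext x; simp [dwC]

@[simp] lemma dwC_univ : dwC (univ : Set X) = univ := by
  ext x; simp only [mem_univ, iff_true]; exact ⟨x, trivial, le_refl x⟩

lemma psep (hP : IsPriestley X) {x y : X} (h : ¬ x ≤ y) :
    ∃ U : Set X, IsClopen U ∧ IsUpperSet U ∧ x ∈ U ∧ y ∉ U := hP.2 x y h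

lemma sep_dwC (hP : IsPriestley X) {C : Set X} (hC : IsCompact C) {x : X} (hx : x ∉ dwC C) :
    ∃ P : Set X, IsClopen P ∧ IsUpperSet P ∧ x ∈ P ∧ P ∩ dwC C = ∅ := by
  have hsep : ∀ c : X, c ∈ C → ∃ U : Set X, IsClopen U ∧ IsUpperSet U ∧ x ∈ U ∧ c ∉ U := by
    intro c hc
    exact psep hP (fun hxc => hx ⟨c, hc, hxc⟩)
  choose! U hU using hsep
  have hcover' : C ⊆ ⋃ i : {c // c ∈ C}, (U i.1)ᶜ := by
    intro c hc
    exact mem_iUnion.2 ⟨⟨c, hc⟩, (hU c hc).2.2.2⟩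
  obtain ⟨t, ht⟩ := hC.elim_finite_subcover (fun i : {c // c ∈ C} => (U i.1)ᶜ)
    (fun i => (hU i.1 i.2).1.compl.isOpen) hcover'
  refine ⟨⋂ i ∈ t, U i.1, isClopen_biInter_finset (fun i _ => (hU i.1 i.2).1), ?_, ?_, ?_⟩
  · intro a b hab ha
    simp only [mem_iInter] at ha ⊢
    exact fun i hi => (hU i.1 i.2).2.1 hab (ha i hi)
  · simp only [mem_iInter]
    exact fun i hi => (hU i.1 i.2).2.2.1
  · ext p; simp only [mem_inter_iff, mem_empty_iff_false, iff_false, not_and]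
    intro hp hpd
    rcases hpd with ⟨c, hc, hpc⟩
    rcases mem_iUnion₂.1 (ht hc) with ⟨i, hi, hci⟩
    have hpU : p ∈ U i.1 := by
      simp only [mem_iInter] at hp; exact hp i hi
    exact hci ((hU i.1 i.2).2.1 hpc hpU)

lemma dwC_closed (hP : IsPriestley X) {C : Set X} (hC : IsCompact C) : IsClosed (dwC C) := by
  rw [← isOpen_compl_iff, isOpen_iff_forall_mem_open]
  intro x hx
  obtain ⟨P, hPc, _, hxP, hPd⟩ := sep_dwC hP hC hx
  refine ⟨P, ?_, hPc.isOpen, hxP⟩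
  intro p hp hpd
  exact absurd (mem_inter hp hpd) (by rw [hPd]; exact notMem_empty p)

lemma le_of_forall_clopen (hP : IsPriestley X) {x z : X}
    (h : ∀ U : Set X, IsClopen U → IsUpperSet U → x ∈ U → z ∈ U) : x ≤ z := by
  by_contra hxz
  obtain ⟨U, hUc, hUu, hxU, hzU⟩ := psep hP hxz
  exact hzU (h U hUc hUu hxU)

lemma exists_min_below (hP : IsPriestley X) {C : Set X} (hC : IsClosed C) {x : X} (hx : x ∈ C) :
    ∃ m ∈ minOf C, m ≤ x := by
  have _ : CompactSpace X := hP.1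
  set F : Set (Set X) := {D : Set X | D.Nonempty ∧ IsClosed D ∧ D ⊆ C ∩ dwC {x} ∧
      ∀ z ∈ D, C ∩ dwC {z} ⊆ D} with hF
  have hD0 : C ∩ dwC {x} ∈ F := by
    refine ⟨⟨x, hx, ⟨x, rfl, le_refl x⟩⟩, hC.inter (dwC_closed hP isCompact_singleton), le_refl _, ?_⟩
    rintro z ⟨hzC, ⟨x', hx', hzx⟩⟩ w ⟨hwC, ⟨z', hz', hwz⟩⟩
    cases hx'; cases hz'
    exact ⟨hwC, ⟨x, rfl, (hwz.trans hzx)⟩⟩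
  have hchain : ∀ c ⊆ F, IsChain (fun a b : Set X => a ⊆ b) c → c.Nonempty →
      ∃ lb ∈ F, ∀ s ∈ c, lb ⊆ s := by
    intro c hcF hchain hcne
    obtain ⟨D₁, hD₁⟩ := hcne
    haveI : Nonempty c := ⟨⟨D₁, hD₁⟩⟩
    have hne : (⋂ D : c, (D : Set X)).Nonempty := by
      apply IsCompact.nonempty_iInter_of_directed_nonempty_isCompact_isClosed
        (fun D : c => (D : Set X))
      · rintro ⟨D, hD⟩ ⟨E, hE⟩
        rcases eq_or_ne D E with rfl | hne
        · exact ⟨⟨D, hD⟩, subset_refl _, subset_refl _⟩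
        rcases hchain hD hE hne with h | h
        · exact ⟨⟨D, hD⟩, subset_refl _, h⟩
        · exact ⟨⟨E, hE⟩, h, subset_refl _⟩
      · exact fun D => (hcF D.2).1
      · exact fun D => ((hcF D.2).2.1).isCompact
      · exact fun D => (hcF D.2).2.1
    refine ⟨⋂ D : c, (D : Set X), ⟨hne, isClosed_iInter (fun D => (hcF D.2).2.1), ?_, ?_⟩, ?_⟩
    · exact (iInter_subset (fun D : c => (D : Set X)) ⟨D₁, hD₁⟩).trans (hcF hD₁).2.2.1
    · intro z hz w hw
      apply mem_iInter.2
      intro D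
      exact (hcF D.2).2.2.2 z (mem_iInter.1 hz D) hw
    · intro s hs
      exact iInter_subset (fun D : c => (D : Set X)) ⟨s, hs⟩
  -- Zorn for minimal (use superset order): we use zorn_subset-like lemma on the dual.
  -- Mathlib: zorn_superset_nonempty
  obtain ⟨D, hDsub, hDmax⟩ := zorn_superset_nonempty F
    (fun c hcF hch hcne => by
      obtain ⟨lb, hlbF, hlb⟩ := hchain c hcF hch hcne
      exact ⟨lb, hlbF, hlb⟩) _ hD0
  obtain ⟨hDne, hDcl, hDsubCx, hDdown⟩ := hDmax.1
  obtain ⟨m, hm⟩ := hDne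
  have hmC : m ∈ C := (hDsubCx hm).1
  have hmx : m ≤ x := by
    rcases (hDsubCx hm).2 with ⟨x', hx', h⟩; cases hx'; exact h
  refine ⟨m, ⟨hmC, ?_⟩, hmx⟩
  intro z hzC hzm
  -- C ∩ ↓z is in F and contained in D
  have hzD : z ∈ D := hDdown m hm ⟨hzC, ⟨m, rfl, hzm⟩⟩
  have hDz : C ∩ dwC {z} ∈ F := by
    refine ⟨⟨z, hzC, ⟨z, rfl, le_refl z⟩⟩, hC.inter (dwC_closed hP isCompact_singleton), ?_, ?_⟩
    · rintro w ⟨hwC, ⟨z', hz', hwz⟩⟩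
      cases hz'
      exact ⟨hwC, ⟨x, rfl, (hwz.trans hzm).trans hmx⟩⟩
    · rintro w ⟨hwC, ⟨z', hz', hwz⟩⟩ v ⟨hvC, ⟨w', hw', hvw⟩⟩
      cases hz'; cases hw'
      exact ⟨hvC, ⟨z, rfl, hvw.trans hwz⟩⟩
  have hsub : C ∩ dwC {z} ⊆ D := fun w hw => hDdown z hzD hw
  have : D = C ∩ dwC {z} := le_antisymm (hDmax.2 hDz hsub) hsub
  have hmz : m ≤ z := by
    have : m ∈ C ∩ dwC {z} := this ▸ hm
    rcases this.2 with ⟨z', hz', h⟩; cases hz'; exact h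
  exact le_antisymm hzm hmz

section DOp

variable {N : Set X}

lemma clopen_upper_inter {U V : Set X} (hU : IsClopen U ∧ IsUpperSet U)
    (hV : IsClopen V ∧ IsUpperSet V) : IsClopen (U ∩ V) ∧ IsUpperSet (U ∩ V) :=
  ⟨hU.1.inter hV.1, hU.2.inter hV.2⟩

lemma clopen_upper_union {U V : Set X} (hU : IsClopen U ∧ IsUpperSet U)
    (hV : IsClopen V ∧ IsUpperSet V) : IsClopen (U ∪ V) ∧ IsUpperSet (U ∪ V) :=
  ⟨hU.1.union hV.1, hU.2.union hV.2⟩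

lemma dOp_mono {U U' : Set X} (h : U ⊆ U') : dOp U ⊆ dOp U' := by
  apply closure_mono
  apply sUnion_subset_sUnion
  rintro W ⟨V, hV, hVU, rfl⟩
  exact ⟨V, hV, hVU.trans h, rfl⟩

lemma empty_mem_ClopSUp : (∅ : Set X) ∈ ClopSUp X := by
  refine ⟨isClopen_empty, isClosed_empty, fun a b _ h => absurd h (notMem_empty a), ?_⟩
  rintro x ⟨hx, -⟩; exact absurd hx (notMem_empty x)

lemma dOp_empty : dOp (∅ : Set X) = ∅ := by
  have h2 : ⋃₀ {W : Set X | ∃ V ∈ ClopSUp X, V ⊆ ∅ ∧ W = starC (starC V)} ⊆ (∅ : Set X) := by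
    rintro x ⟨W, ⟨V, hV, hVe, rfl⟩, hxW⟩
    have hVempty : V = ∅ := subset_empty_iff.1 hVe
    subst hVempty
    have h1 : starC (∅ : Set X) = univ := by simp [starC]
    have h3 : starC (univ : Set X) = ∅ := by simp [starC, dwC_univ]
    rw [h1, h3] at hxW
    exact hxW
  rw [dOp, subset_empty_iff.1 h2, closure_empty]

variable (hP : IsPriestley X) (hN : IsNuclearSub N)
  (hNd : ∀ U : Set X, IsClopen U → IsUpperSet U → jN N U = dOp U)

include hNd in
lemma dOp_eq {U : Set X} (h1 : IsClopen U) (h2 : IsUpperSet U) :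
    dOp U = (dwC (N \ U))ᶜ := (hNd U h1 h2).symm

include hNd in
lemma dwC_N_univ : dwC N = univ := by
  have h : jN N ∅ = dOp ∅ :=
    hNd ∅ isClopen_empty (fun a b _ h => absurd h (notMem_empty a))
  rw [dOp_empty] at h
  have h2 : (dwC (N \ ∅))ᶜ = (∅ : Set X) := h
  rw [diff_empty] at h2
  have h3 := congrArg compl h2
  rwa [compl_compl, compl_empty] at h3

include hNd in
lemma subset_dOp {U : Set X} (h1 : IsClopen U) (h2 : IsUpperSet U) : U ⊆ dOp U := by
  rw [dOp_eq hNd h1 h2]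
  rintro x hx ⟨n, ⟨hnN, hnU⟩, hxn⟩
  exact hnU (h2 hxn hx)

include hP hN hNd in
lemma dOp_clopen_upper {U : Set X} (h1 : IsClopen U) (h2 : IsUpperSet U) :
    IsClopen (dOp U) ∧ IsUpperSet (dOp U) := by
  have _ : CompactSpace X := hP.1
  have hcl : IsClosed (N \ U) := hN.1.sdiff h1.isOpen
  have hdw : IsClosed (dwC (N \ U)) := dwC_closed hP hcl.isCompact
  refine ⟨⟨?_, ?_⟩, ?_⟩
  · rw [dOp]; exact isClosed_closure
  · rw [dOp_eq hNd h1 h2]; exact hdw.isOpen_compl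
  · rw [dOp_eq hNd h1 h2]; exact dwC_lower.compl

include hNd in
lemma dOp_N_inter {U : Set X} (h1 : IsClopen U) (h2 : IsUpperSet U) :
    N ∩ dOp U = N ∩ U := by
  apply subset_antisymm
  · rintro x ⟨hxN, hxd⟩
    rw [dOp_eq hNd h1 h2] at hxd
    by_contra hxU
    have hxU' : x ∉ U := fun h => hxU ⟨hxN, h⟩
    exact hxd ⟨x, ⟨hxN, hxU'⟩, le_refl x⟩
  · rintro x ⟨hxN, hxU⟩
    exact ⟨hxN, subset_dOp hNd h1 h2 hxU⟩

include hNd in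
lemma mem_dOp_iff_of_N {U : Set X} (h1 : IsClopen U) (h2 : IsUpperSet U) {x : X} (hx : x ∈ N) :
    x ∈ dOp U ↔ x ∈ U := by
  constructor
  · intro h; exact ((dOp_N_inter hNd h1 h2).subset ⟨hx, h⟩).2
  · intro h; exact ((dOp_N_inter hNd h1 h2).symm.subset ⟨hx, h⟩).2

include hNd in
lemma dOp_inter {U V : Set X} (hU1 : IsClopen U) (hU2 : IsUpperSet U)
    (hV1 : IsClopen V) (hV2 : IsUpperSet V) :
    dOp (U ∩ V) = dOp U ∩ dOp V := by
  rw [dOp_eq hNd (hU1.inter hV1) (hU2.inter hV2), dOp_eq hNd hU1 hU2, dOp_eq hNd hV1 hV2]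
  have : N \ (U ∩ V) = (N \ U) ∪ (N \ V) := by
    ext x; by_cases hU : x ∈ U <;> by_cases hV : x ∈ V <;> simp [hU, hV]
  rw [this, dwC_union, compl_union]

include hP hN hNd in
lemma dOp_idem {U : Set X} (h1 : IsClopen U) (h2 : IsUpperSet U) :
    dOp (dOp U) = dOp U := by
  obtain ⟨hd1, hd2⟩ := dOp_clopen_upper hP hN hNd h1 h2
  have hdiff : N \ dOp U = N \ U := by
    ext x
    constructor
    · rintro ⟨hxN, hxd⟩
      exact ⟨hxN, fun hxU => hxd (subset_dOp hNd h1 h2 hxU)⟩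
    · rintro ⟨hxN, hxU⟩
      exact ⟨hxN, fun hxd => hxU ((mem_dOp_iff_of_N hNd h1 h2 hxN).1 hxd)⟩
  rw [dOp_eq hNd hd1 hd2, hdiff, ← dOp_eq hNd h1 h2]

include hP hN hNd in
lemma dOp_absorb {U V : Set X} (hU1 : IsClopen U) (hU2 : IsUpperSet U)
    (hV1 : IsClopen V) (hV2 : IsUpperSet V) :
    dOp (dOp U ∪ V) = dOp (U ∪ V) := by
  obtain ⟨hd1, hd2⟩ := dOp_clopen_upper hP hN hNd hU1 hU2
  apply subset_antisymm
  · have h1 : dOp U ∪ V ⊆ dOp (U ∪ V) := by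
      apply union_subset
      · exact dOp_mono subset_union_left
      · exact (subset_union_right).trans (subset_dOp hNd (hU1.union hV1) (hU2.union hV2))
    have := dOp_mono h1
    rwa [dOp_idem hP hN hNd (hU1.union hV1) (hU2.union hV2)] at this
  · exact dOp_mono (union_subset_union_left V (subset_dOp hNd hU1 hU2))

include hNd in
lemma dOp_mono_N {U V : Set X} (hU1 : IsClopen U) (hU2 : IsUpperSet U)
    (hV1 : IsClopen V) (hV2 : IsUpperSet V) (h : N ∩ U ⊆ V) : dOp U ⊆ dOp V := by
  rw [dOp_eq hNd hU1 hU2, dOp_eq hNd hV1 hV2]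
  apply compl_subset_compl.2
  apply dwC_mono
  rintro n ⟨hnN, hnV⟩
  exact ⟨hnN, fun hnU => hnV (h ⟨hnN, hnU⟩)⟩

end DOp

section CEL

variable (hP : IsPriestley X)

lemma directed_finset_bound {G : Set (Set X)} (hGne : G.Nonempty)
    (hdir : ∀ A ∈ G, ∀ B ∈ G, ∃ C ∈ G, A ∪ B ⊆ C) (t : Finset {A : Set X // A ∈ G}) :
    ∃ C ∈ G, ∀ i ∈ t, (i : {A : Set X // A ∈ G}).1 ⊆ C := by
  classical
  induction t using Finset.induction_on with
  | empty =>
    obtain ⟨C, hC⟩ := hGne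
    exact ⟨C, hC, fun i hi => absurd hi (Finset.notMem_empty i)⟩
  | insert a s hni ih =>
    obtain ⟨C, hC, hCb⟩ := ih
    obtain ⟨C', hC', hsub⟩ := hdir a.1 a.2 C hC
    refine ⟨C', hC', fun i hi => ?_⟩
    rcases Finset.mem_insert.1 hi with rfl | hi
    · exact (subset_union_left).trans hsub
    · exact (hCb i hi).trans ((subset_union_right).trans hsub)

include hP in
/-- Clopen Scott upsets are "compact elements": if contained in the closure of a
directed union of open upsets, they are contained in one member. -/
lemma cel {W : Set X} (hW : W ∈ ClopSUp X) {G : Set (Set X)} (hGne : G.Nonempty)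
    (hGopen : ∀ A ∈ G, IsOpen A ∧ IsUpperSet A)
    (hdir : ∀ A ∈ G, ∀ B ∈ G, ∃ C ∈ G, A ∪ B ⊆ C)
    (hsub : W ⊆ closure (⋃₀ G)) : ∃ A ∈ G, W ⊆ A := by
  have _ : CompactSpace X := hP.1
  have hstep : W ⊆ ⋃₀ G := by
    intro w hw
    obtain ⟨y, hy, hyw⟩ := exists_min_below hP hW.2.1 hw
    have hyY : y ∈ localicPts X := hW.2.2.2 hy
    have hyc : y ∈ closure (⋃₀ G) := hsub hy.1
    obtain ⟨z, hz⟩ := (mem_closure_iff.1 hyc) (dwC {y}) hyY.isOpen ⟨y, rfl, le_refl y⟩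
    obtain ⟨⟨y', hy', hzy⟩, A, hA, hzA⟩ := hz
    cases hy'
    have hyA : y ∈ A := (hGopen A hA).2 hzy hzA
    exact ⟨A, hA, (hGopen A hA).2 hyw hyA⟩
  have hcover : W ⊆ ⋃ i : {A : Set X // A ∈ G}, i.1 := by
    intro w hw
    obtain ⟨A, hA, hwA⟩ := hstep hw
    exact mem_iUnion.2 ⟨⟨A, hA⟩, hwA⟩
  obtain ⟨t, ht⟩ := (hW.2.1.isCompact).elim_finite_subcover
    (fun i : {A : Set X // A ∈ G} => i.1) (fun i => (hGopen i.1 i.2).1) hcover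
  obtain ⟨C, hC, hCb⟩ := directed_finset_bound hGne hdir t
  refine ⟨C, hC, fun w hw => ?_⟩
  rcases mem_iUnion₂.1 (ht hw) with ⟨i, hi, hwi⟩
  exact hCb i hi hwi

end CEL

section SC

variable {N : Set X} (hL : IsLSpace X) (hN : IsNuclearSub N)
  (hNd : ∀ U : Set X, IsClopen U → IsUpperSet U → jN N U = dOp U)

include hL hN hNd in
/-- Scott continuity of `dOp` combined with compactness of clopen Scott upsets. -/
lemma sc {G : Set (Set X)} (hGne : G.Nonempty)
    (hGcu : ∀ A ∈ G, IsClopen A ∧ IsUpperSet A)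
    (hdir : ∀ A ∈ G, ∀ B ∈ G, ∃ C ∈ G, A ∪ B ⊆ C)
    {W : Set X} (hW : W ∈ ClopSUp X) (h : W ⊆ dOp (closure (⋃₀ G))) :
    ∃ A ∈ G, W ⊆ dOp A := by
  have hP := hL.1
  set D : Set (Set X) := {E : Set X | ∃ A ∈ G, E = dOp A} with hD
  have hDne : D.Nonempty := by
    obtain ⟨A, hA⟩ := hGne; exact ⟨dOp A, A, hA, rfl⟩
  have hDopen : ∀ E ∈ D, IsOpen E ∧ IsUpperSet E := by
    rintro E ⟨A, hA, rfl⟩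
    obtain ⟨h1, h2⟩ := dOp_clopen_upper hP hN hNd (hGcu A hA).1 (hGcu A hA).2
    exact ⟨h1.isOpen, h2⟩
  have hDdir : ∀ E ∈ D, ∀ E' ∈ D, ∃ E'' ∈ D, E ∪ E' ⊆ E'' := by
    rintro E ⟨A, hA, rfl⟩ E' ⟨A', hA', rfl⟩
    obtain ⟨C, hC, hsubC⟩ := hdir A hA A' hA'
    exact ⟨dOp C, ⟨C, hC, rfl⟩,
      union_subset (dOp_mono ((subset_union_left).trans hsubC))
        (dOp_mono ((subset_union_right).trans hsubC))⟩
  -- dOp (closure ⋃₀ G) ⊆ closure (⋃₀ D)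
  have hkey : dOp (closure (⋃₀ G)) ⊆ closure (⋃₀ D) := by
    rw [dOp]
    apply closure_minimal ?_ isClosed_closure
    rintro x ⟨W', ⟨V, hV, hVsub, rfl⟩, hxW'⟩
    obtain ⟨A, hA, hVA⟩ := cel hP hV hGne (fun A hA => ⟨(hGcu A hA).1.isOpen, (hGcu A hA).2⟩)
      hdir hVsub
    have : starC (starC V) ⊆ dOp A := by
      refine (subset_sUnion_of_mem ?_).trans subset_closure
      exact ⟨V, hV, hVA, rfl⟩
    exact subset_closure ⟨dOp A, ⟨A, hA, rfl⟩, this hxW'⟩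
  obtain ⟨E, ⟨A, hA, rfl⟩, hWE⟩ := cel hP hW hDne hDopen hDdir (h.trans hkey)
  exact ⟨A, hA, hWE⟩

end SC

section LemB

lemma scott_nbhd (hX : IsArithmeticLSpace X) {y : X} (hy : y ∈ localicPts X)
    {U : Set X} (hU1 : IsClopen U) (hU2 : IsUpperSet U) (hyU : y ∈ U) :
    ∃ W ∈ ClopSUp X, y ∈ W ∧ W ⊆ U := by
  have hyc : y ∈ closure (coreC U) := hX.1.2 U hU1 hU2 hyU
  obtain ⟨z, hz⟩ := (mem_closure_iff.1 hyc) (dwC {y}) hy.isOpen ⟨y, rfl, le_refl y⟩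
  obtain ⟨⟨y', hy', hzy⟩, W, ⟨hWs, hWU⟩, hzW⟩ := hz
  cases hy'
  exact ⟨W, hWs, hWs.2.2.1 hzy hzW, hWU⟩

lemma localic_of_not_mem_closure (hL : IsLSpace X) {m : X}
    (hm : m ∉ closure ((dwC {m})ᶜ)) : m ∈ localicPts X := by
  have hP := hL.1
  have hdcl : IsClosed (dwC ({m} : Set X)) := dwC_closed hP isCompact_singleton
  obtain ⟨hZo, hZu⟩ := hL.2 (dwC {m})ᶜ hdcl.isOpen_compl dwC_lower.compl
  have heq : (dwC ({m} : Set X))ᶜ = closure ((dwC ({m} : Set X))ᶜ) := by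
    apply subset_antisymm subset_closure
    intro z hz
    by_contra hzc
    have hzd : z ∈ dwC ({m} : Set X) := not_not.1 (fun h => hzc h)
    rcases hzd with ⟨m', hm', hzm⟩
    cases hm'
    exact hm (hZu hzm hz)
  refine ⟨?_, ?_⟩
  · exact hdcl
  · rw [← isClosed_compl_iff, heq]
    exact isClosed_closure

lemma sUnion_D0 (hP : IsPriestley X) (m : X) :
    ⋃₀ {D : Set X | (IsClopen D ∧ IsUpperSet D) ∧ D ∩ dwC {m} = ∅} = (dwC ({m} : Set X))ᶜ := by
  apply subset_antisymm
  · rintro x ⟨D, ⟨-, hDm⟩, hxD⟩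
    intro hxd
    exact absurd (mem_inter hxD hxd) (by rw [hDm]; exact notMem_empty x)
  · intro x hx
    obtain ⟨P, hP1, hP2, hxP, hPd⟩ := sep_dwC hP isCompact_singleton hx
    exact ⟨P, ⟨⟨hP1, hP2⟩, hPd⟩, hxP⟩

end LemB

section MinLocalic

variable {N : Set X} (hX : IsArithmeticLSpace X) (hN : IsNuclearSub N)
  (hNd : ∀ U : Set X, IsClopen U → IsUpperSet U → jN N U = dOp U)

include hX hN hNd in
/-- The key lemma: minimal points of `(⋂₀ C) ∩ N` are localic, for a filtered family `C`
of clopen Scott upsets. -/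
lemma min_localic {C : Set (Set X)} (hCne : C.Nonempty) (hCsub : C ⊆ ClopSUp X)
    (hCinter : ∀ A ∈ C, ∀ B ∈ C, A ∩ B ∈ C)
    {m : X} (hm : m ∈ minOf ((⋂₀ C) ∩ N)) : m ∈ localicPts X := by
  classical
  have hL : IsLSpace X := hX.1.1
  have hP : IsPriestley X := hL.1
  have _ : CompactSpace X := hP.1
  have hmN : m ∈ N := hm.1.2
  have hmC : ∀ W ∈ C, m ∈ W := fun W hW => hm.1.1 W hW
  by_cases hmem : m ∈ closure ((dwC ({m} : Set X))ᶜ)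
  swap
  · exact localic_of_not_mem_closure hL hmem
  exfalso
  -- setup
  set A : Set X := closure ((dwC ({m} : Set X))ᶜ) with hAdef
  have hdcl : IsClosed (dwC ({m} : Set X)) := dwC_closed hP isCompact_singleton
  obtain ⟨hAo, hAu⟩ := hL.2 (dwC {m})ᶜ hdcl.isOpen_compl dwC_lower.compl
  have hA : IsClopen A ∧ IsUpperSet A := ⟨⟨isClosed_closure, hAo⟩, hAu⟩
  set 𝔻 : Set (Set X) := {P : Set X | (IsClopen P ∧ IsUpperSet P) ∧ dOp P = P} with h𝔻def
  have hD_cu : ∀ P ∈ 𝔻, IsClopen P ∧ IsUpperSet P := fun P hP' => hP'.1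
  have hdOp_mem : ∀ U : Set X, IsClopen U → IsUpperSet U → dOp U ∈ 𝔻 := by
    intro U h1 h2
    exact ⟨dOp_clopen_upper hP hN hNd h1 h2, dOp_idem hP hN hNd h1 h2⟩
  have h𝔻inter : ∀ P ∈ 𝔻, ∀ P' ∈ 𝔻, P ∩ P' ∈ 𝔻 := by
    intro P hP' P' hP''
    refine ⟨clopen_upper_inter hP'.1 hP''.1, ?_⟩
    rw [dOp_inter hNd hP'.1.1 hP'.1.2 hP''.1.1 hP''.1.2, hP'.2, hP''.2]
  have hempty𝔻 : (∅ : Set X) ∈ 𝔻 :=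
    ⟨⟨isClopen_empty, fun a b _ h => absurd h (notMem_empty a)⟩, dOp_empty⟩
  have huniv𝔻 : (univ : Set X) ∈ 𝔻 := by
    refine ⟨⟨isClopen_univ, fun a b _ _ => trivial⟩, ?_⟩
    rw [dOp_eq hNd isClopen_univ (fun a b _ _ => trivial), diff_univ, dwC_empty, compl_empty]
  -- the "absorb" computation for two unions
  have habs2 : ∀ B₁ B₂ : Set X, B₁ ∈ 𝔻 → B₂ ∈ 𝔻 →
      dOp (dOp (A ∪ B₁) ∪ dOp (A ∪ B₂)) = dOp (A ∪ dOp (B₁ ∪ B₂)) := by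
    intro B₁ B₂ hB₁ hB₂
    have hAB₁ : IsClopen (A ∪ B₁) ∧ IsUpperSet (A ∪ B₁) := clopen_upper_union hA hB₁.1
    have hAB₂ : IsClopen (A ∪ B₂) ∧ IsUpperSet (A ∪ B₂) := clopen_upper_union hA hB₂.1
    have hB₁₂ : IsClopen (B₁ ∪ B₂) ∧ IsUpperSet (B₁ ∪ B₂) := clopen_upper_union hB₁.1 hB₂.1
    have e1 : dOp (dOp (A ∪ B₁) ∪ dOp (A ∪ B₂)) = dOp ((A ∪ B₁) ∪ dOp (A ∪ B₂)) :=
      dOp_absorb hP hN hNd hAB₁.1 hAB₁.2 (dOp_clopen_upper hP hN hNd hAB₂.1 hAB₂.2).1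
        (dOp_clopen_upper hP hN hNd hAB₂.1 hAB₂.2).2
    have e2 : dOp ((A ∪ B₁) ∪ dOp (A ∪ B₂)) = dOp (dOp (A ∪ B₂) ∪ (A ∪ B₁)) := by
      rw [union_comm]
    have e3 : dOp (dOp (A ∪ B₂) ∪ (A ∪ B₁)) = dOp ((A ∪ B₂) ∪ (A ∪ B₁)) :=
      dOp_absorb hP hN hNd hAB₂.1 hAB₂.2 hAB₁.1 hAB₁.2
    have e4 : ((A ∪ B₂) ∪ (A ∪ B₁)) = A ∪ (B₁ ∪ B₂) := by
      ext x; simp only [mem_union]; tauto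
    have e5 : dOp (A ∪ dOp (B₁ ∪ B₂)) = dOp (dOp (B₁ ∪ B₂) ∪ A) := by rw [union_comm]
    have e6 : dOp (dOp (B₁ ∪ B₂) ∪ A) = dOp ((B₁ ∪ B₂) ∪ A) :=
      dOp_absorb hP hN hNd hB₁₂.1 hB₁₂.2 hA.1 hA.2
    have e7 : ((B₁ ∪ B₂) ∪ A) = A ∪ (B₁ ∪ B₂) := union_comm _ _
    rw [e1, e2, e3, e4, e5, e6, e7]
  -- the filter and ideal
  set G : Set (Set X) :=
    {Cc : Set X | Cc ∈ 𝔻 ∧ ∃ B ∈ 𝔻, m ∉ B ∧ ∃ W ∈ C, dOp W ⊆ dOp (Cc ∪ B)} with hGdef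
  set I : Set (Set X) :=
    {E : Set X | E ∈ 𝔻 ∧ ∃ B ∈ 𝔻, m ∉ B ∧ E ⊆ dOp (A ∪ B)} with hIdef
  have hCcu : ∀ W ∈ C, IsClopen W ∧ IsUpperSet W :=
    fun W hW => ⟨(hCsub hW).1, (hCsub hW).2.2.1⟩
  -- G is upward closed in 𝔻
  have hGup : ∀ Cc ∈ G, ∀ Cc' ∈ 𝔻, Cc ⊆ Cc' → Cc' ∈ G := by
    rintro Cc ⟨-, B, hB, hmB, W, hW, hs⟩ Cc' hCc' hsub
    exact ⟨hCc', B, hB, hmB, W, hW, hs.trans (dOp_mono (union_subset_union_left B hsub))⟩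
  -- G is closed under intersections
  have hGinter : ∀ C₁ ∈ G, ∀ C₂ ∈ G, C₁ ∩ C₂ ∈ G := by
    rintro C₁ ⟨hC₁, B₁, hB₁, hm₁, W₁, hW₁, hs₁⟩ C₂ ⟨hC₂, B₂, hB₂, hm₂, W₂, hW₂, hs₂⟩
    have hB₁₂cu := clopen_upper_union hB₁.1 hB₂.1
    set B : Set X := dOp (B₁ ∪ B₂) with hBdef
    have hB𝔻 : B ∈ 𝔻 := hdOp_mem _ hB₁₂cu.1 hB₁₂cu.2
    have hmB : m ∉ B := by
      intro h
      rcases (mem_dOp_iff_of_N hNd hB₁₂cu.1 hB₁₂cu.2 hmN).1 h with h' | h'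
      exacts [hm₁ h', hm₂ h']
    have hBsub : B₁ ∪ B₂ ⊆ B := subset_dOp hNd hB₁₂cu.1 hB₁₂cu.2
    refine ⟨h𝔻inter C₁ hC₁ C₂ hC₂, B, hB𝔻, hmB, W₁ ∩ W₂, hCinter W₁ hW₁ W₂ hW₂, ?_⟩
    have hW₁cu := hCcu W₁ hW₁
    have hW₂cu := hCcu W₂ hW₂
    have hC₁B := clopen_upper_union hC₁.1 hB𝔻.1
    have hC₂B := clopen_upper_union hC₂.1 hB𝔻.1
    calc dOp (W₁ ∩ W₂) = dOp W₁ ∩ dOp W₂ :=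
            dOp_inter hNd hW₁cu.1 hW₁cu.2 hW₂cu.1 hW₂cu.2
      _ ⊆ dOp (C₁ ∪ B) ∩ dOp (C₂ ∪ B) := by
            apply inter_subset_inter
            · exact hs₁.trans (dOp_mono (union_subset subset_union_left
                (((subset_union_left).trans hBsub).trans subset_union_right)))
            · exact hs₂.trans (dOp_mono (union_subset subset_union_left
                (((subset_union_right).trans hBsub).trans subset_union_right)))
      _ = dOp ((C₁ ∪ B) ∩ (C₂ ∪ B)) :=
            (dOp_inter hNd hC₁B.1 hC₁B.2 hC₂B.1 hC₂B.2).symm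
      _ = dOp ((C₁ ∩ C₂) ∪ B) := by
            have hxx : (C₁ ∪ B) ∩ (C₂ ∪ B) = (C₁ ∩ C₂) ∪ B := by
              ext x; simp only [mem_inter_iff, mem_union]; tauto
            rw [hxx]
  -- membership helpers for I
  have hI_of_notm : ∀ P ∈ 𝔻, m ∉ P → P ∈ I := by
    intro P hP' hmP
    have hAP := clopen_upper_union hA hP'.1
    exact ⟨hP', P, hP', hmP, (subset_union_right).trans (subset_dOp hNd hAP.1 hAP.2)⟩
  have hdOpA𝔻 : dOp A ∈ 𝔻 := hdOp_mem _ hA.1 hA.2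
  have hdOpA_I : dOp A ∈ I := by
    refine ⟨hdOpA𝔻, ∅, hempty𝔻, notMem_empty m, ?_⟩
    rw [union_empty]
  have hunivG : (univ : Set X) ∈ G := by
    obtain ⟨W₀, hW₀⟩ := hCne
    exact ⟨huniv𝔻, ∅, hempty𝔻, notMem_empty m, W₀, hW₀, by
      rw [union_empty, huniv𝔻.2]; exact subset_univ _⟩
  -- main claim: dOp A ∈ G
  have claimG : dOp A ∈ G := by
    by_contra hnG
    -- G and I are disjoint
    have hGI : ∀ E ∈ G, E ∉ I := by
      rintro E ⟨hE𝔻, B'', hB'', hm'', W, hW, hs⟩ ⟨-, B', hB', hm', hsub'⟩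
      apply hnG
      have hAB' := clopen_upper_union hA hB'.1
      have hAB'' := clopen_upper_union hA hB''.1
      have hB₃cu := clopen_upper_union hB'.1 hB''.1
      set B₃ : Set X := dOp (B' ∪ B'') with hB₃def
      have hB₃𝔻 : B₃ ∈ 𝔻 := hdOp_mem _ hB₃cu.1 hB₃cu.2
      have hmB₃ : m ∉ B₃ := by
        intro h
        rcases (mem_dOp_iff_of_N hNd hB₃cu.1 hB₃cu.2 hmN).1 h with h' | h'
        exacts [hm' h', hm'' h']
      refine ⟨hdOpA𝔻, B₃, hB₃𝔻, hmB₃, W, hW, ?_⟩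
      have step1 : dOp W ⊆ dOp (dOp (A ∪ B') ∪ dOp (A ∪ B'')) := by
        refine hs.trans (dOp_mono (union_subset ?_ ?_))
        · exact hsub'.trans subset_union_left
        · exact ((subset_union_right).trans (subset_dOp hNd hAB''.1 hAB''.2)).trans
            subset_union_right
      have step2 : dOp (dOp (A ∪ B') ∪ dOp (A ∪ B'')) = dOp (A ∪ B₃) :=
        habs2 B' B'' hB' hB''
      have step3 : dOp (dOp A ∪ B₃) = dOp (A ∪ B₃) :=
        dOp_absorb hP hN hNd hA.1 hA.2 hB₃𝔻.1.1 hB₃𝔻.1.2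
      rw [step3]
      rw [step2] at step1
      exact step1
    -- Zorn
    set FF : Set (Set (Set X)) := {Q : Set (Set X) | G ⊆ Q ∧ Q ⊆ 𝔻 ∧
        (∀ P ∈ Q, ∀ P' ∈ 𝔻, P ⊆ P' → P' ∈ Q) ∧ (∀ P ∈ Q, ∀ P' ∈ Q, P ∩ P' ∈ Q) ∧
        ∀ E ∈ Q, E ∉ I} with hFFdef
    have hGFF : G ∈ FF := ⟨subset_refl G, fun P hP' => hP'.1,
      fun P hP' P' hP'' hsub => hGup P hP' P' hP'' hsub, hGinter, hGI⟩
    have hchain : ∀ c ⊆ FF, IsChain (fun a b : Set (Set X) => a ⊆ b) c → c.Nonempty →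
        ∃ ub ∈ FF, ∀ s ∈ c, s ⊆ ub := by
      intro c hcFF hch ⟨Q₁, hQ₁⟩
      refine ⟨⋃₀ c, ⟨?_, ?_, ?_, ?_, ?_⟩, fun s hs => subset_sUnion_of_mem hs⟩
      · exact (hcFF hQ₁).1.trans (subset_sUnion_of_mem hQ₁)
      · rintro P ⟨Q', hQ', hPQ'⟩
        exact (hcFF hQ').2.1 hPQ'
      · rintro P ⟨Q', hQ', hPQ'⟩ P' hP'𝔻 hsub
        exact ⟨Q', hQ', (hcFF hQ').2.2.1 P hPQ' P' hP'𝔻 hsub⟩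
      · rintro P ⟨Q', hQ', hPQ'⟩ P' ⟨Q'', hQ'', hP'Q''⟩
        rcases eq_or_ne Q' Q'' with rfl | hne
        · exact ⟨Q', hQ', (hcFF hQ').2.2.2.1 P hPQ' P' hP'Q''⟩
        rcases hch hQ' hQ'' hne with h | h
        · exact ⟨Q'', hQ'', (hcFF hQ'').2.2.2.1 P (h hPQ') P' hP'Q''⟩
        · exact ⟨Q', hQ', (hcFF hQ').2.2.2.1 P hPQ' P' (h hP'Q'')⟩
      · rintro E ⟨Q', hQ', hEQ'⟩
        exact (hcFF hQ').2.2.2.2 E hEQ'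
    obtain ⟨Q, hGQ, hQmax⟩ := zorn_subset_nonempty FF hchain G hGFF
    obtain ⟨hQ1, hQ2, hQ3, hQ4, hQ5⟩ := hQmax.1
    have hunivQ : (univ : Set X) ∈ Q := hQ1 hunivG
    have hemptyI : (∅ : Set X) ∈ I := hI_of_notm ∅ hempty𝔻 (notMem_empty m)
    have hemptyQ : (∅ : Set X) ∉ Q := fun h => hQ5 ∅ h hemptyI
    -- the separation subclaim
    have hsep : ∀ P ∈ 𝔻, P ∉ Q →
        ∃ q ∈ Q, ∃ B ∈ 𝔻, m ∉ B ∧ q ∩ P ⊆ dOp (A ∪ B) := by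
      intro P hP𝔻 hPQ
      set Q₁ : Set (Set X) := {R : Set X | R ∈ 𝔻 ∧ ∃ q ∈ Q, q ∩ P ⊆ R} with hQ₁def
      have hQQ₁ : Q ⊆ Q₁ := fun R hR => ⟨hQ2 hR, R, hR, inter_subset_left⟩
      have hPQ₁ : P ∈ Q₁ := ⟨hP𝔻, univ, hunivQ, by rw [univ_inter]⟩
      have hne : Q ≠ Q₁ := fun h => hPQ (h ▸ hPQ₁)
      have hnotFF : Q₁ ∉ FF := by
        intro hFF
        exact hne (le_antisymm hQQ₁ (hQmax.2 hFF hQQ₁))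
      -- all conditions except the last hold for Q₁
      have h1 : G ⊆ Q₁ := (hQ1.trans hQQ₁)
      have h2 : Q₁ ⊆ 𝔻 := fun R hR => hR.1
      have h3 : ∀ R ∈ Q₁, ∀ R' ∈ 𝔻, R ⊆ R' → R' ∈ Q₁ := by
        rintro R ⟨hR𝔻, q, hq, hqP⟩ R' hR'𝔻 hsub
        exact ⟨hR'𝔻, q, hq, hqP.trans hsub⟩
      have h4 : ∀ R ∈ Q₁, ∀ R' ∈ Q₁, R ∩ R' ∈ Q₁ := by
        rintro R ⟨hR𝔻, q, hq, hqP⟩ R' ⟨hR'𝔻, q', hq', hq'P⟩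
        refine ⟨h𝔻inter R hR𝔻 R' hR'𝔻, q ∩ q', hQ4 q hq q' hq', ?_⟩
        intro x hx
        exact ⟨hqP ⟨hx.1.1, hx.2⟩, hq'P ⟨hx.1.2, hx.2⟩⟩
      have h5 : ¬ ∀ E ∈ Q₁, E ∉ I := by
        intro h5'
        exact hnotFF ⟨h1, h2, h3, h4, h5'⟩
      push_neg at h5
      obtain ⟨E, hEQ₁, hEI⟩ := h5
      obtain ⟨-, q, hq, hqPE⟩ := hEQ₁
      obtain ⟨-, B, hB𝔻, hmB, hEsub⟩ := hEI
      exact ⟨q, hq, B, hB𝔻, hmB, hqPE.trans hEsub⟩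
    -- primality
    have hprime : ∀ P ∈ 𝔻, ∀ P' ∈ 𝔻, dOp (P ∪ P') ∈ Q → P ∈ Q ∨ P' ∈ Q := by
      intro P hP𝔻 P' hP'𝔻 hjoin
      by_contra hcon
      push_neg at hcon
      obtain ⟨hPQ, hP'Q⟩ := hcon
      obtain ⟨q₁, hq₁, B₁, hB₁𝔻, hmB₁, h1⟩ := hsep P hP𝔻 hPQ
      obtain ⟨q₂, hq₂, B₂, hB₂𝔻, hmB₂, h2⟩ := hsep P' hP'𝔻 hP'Q
      set r : Set X := q₁ ∩ q₂ with hrdef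
      have hrQ : r ∈ Q := hQ4 q₁ hq₁ q₂ hq₂
      have hr𝔻 : r ∈ 𝔻 := hQ2 hrQ
      set q : Set X := r ∩ dOp (P ∪ P') with hqdef
      have hqQ : q ∈ Q := hQ4 r hrQ _ hjoin
      have hq𝔻 : q ∈ 𝔻 := hQ2 hqQ
      -- show q ∈ I
      have hPP'cu : IsClopen (P ∪ P') ∧ IsUpperSet (P ∪ P') :=
        clopen_upper_union hP𝔻.1 hP'𝔻.1
      have hB₃cu := clopen_upper_union hB₁𝔻.1 hB₂𝔻.1
      set B₃ : Set X := dOp (B₁ ∪ B₂) with hB₃def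
      have hB₃𝔻 : B₃ ∈ 𝔻 := hdOp_mem _ hB₃cu.1 hB₃cu.2
      have hmB₃ : m ∉ B₃ := by
        intro h
        rcases (mem_dOp_iff_of_N hNd hB₃cu.1 hB₃cu.2 hmN).1 h with h' | h'
        exacts [hmB₁ h', hmB₂ h']
      have hqsub : q ⊆ dOp (A ∪ B₃) := by
        have e1 : q = dOp (r ∩ (P ∪ P')) := by
          rw [dOp_inter hNd hr𝔻.1.1 hr𝔻.1.2 hPP'cu.1 hPP'cu.2, hr𝔻.2]
        have e2 : r ∩ (P ∪ P') ⊆ dOp (A ∪ B₁) ∪ dOp (A ∪ B₂) := by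
          rintro x ⟨hxr, hx | hx⟩
          · exact Or.inl (h1 ⟨hxr.1, hx⟩)
          · exact Or.inr (h2 ⟨hxr.2, hx⟩)
        have e3 : dOp (r ∩ (P ∪ P')) ⊆ dOp (dOp (A ∪ B₁) ∪ dOp (A ∪ B₂)) := dOp_mono e2
        rw [habs2 B₁ B₂ hB₁𝔻 hB₂𝔻] at e3
        rw [e1]
        exact e3
      exact hQ5 q hqQ ⟨hq𝔻, B₃, hB₃𝔻, hmB₃, hqsub⟩
    -- every member of Q contains m
    have hQF : ∀ P ∈ Q, m ∈ P := by
      intro P hPQ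
      by_contra hmP
      exact hQ5 P hPQ (hI_of_notm P (hQ2 hPQ) hmP)
    have hdOpAQ : dOp A ∉ Q := fun h => hQ5 _ h hdOpA_I
    -- construct the point z
    set ι : Type _ := {p : Set X × Set X // p.1 ∈ Q ∧ p.2 ∈ 𝔻 ∧ p.2 ∉ Q} with hιdef
    haveI : Nonempty ι := ⟨⟨(univ, ∅), hunivQ, hempty𝔻, hemptyQ⟩⟩
    set Z : ι → Set X := fun i => N ∩ i.1.1 ∩ (i.1.2)ᶜ with hZdef
    have hZne : ∀ i, (Z i).Nonempty := by
      rintro ⟨⟨P, R⟩, hPQ, hR𝔻, hRQ⟩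
      rw [nonempty_iff_ne_empty]
      intro hempty
      have hPsub : N ∩ P ⊆ R := by
        intro x hx
        by_contra hxR
        exact absurd (show x ∈ (∅ : Set X) by rw [← hempty]; exact ⟨⟨hx.1, hx.2⟩, hxR⟩) (notMem_empty x)
      have hP𝔻 : P ∈ 𝔻 := hQ2 hPQ
      have hmono : dOp P ⊆ dOp R := dOp_mono_N hNd hP𝔻.1.1 hP𝔻.1.2 hR𝔻.1.1 hR𝔻.1.2 hPsub
      rw [hP𝔻.2, hR𝔻.2] at hmono
      exact hRQ (hQ3 P hPQ R hR𝔻 hmono)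
    have hZdir : Directed (fun a b : Set X => a ⊇ b) Z := by
      rintro ⟨⟨P₁, R₁⟩, hP₁Q, hR₁𝔻, hR₁Q⟩ ⟨⟨P₂, R₂⟩, hP₂Q, hR₂𝔻, hR₂Q⟩
      have hR₁₂cu := clopen_upper_union hR₁𝔻.1 hR₂𝔻.1
      have hR₃𝔻 : dOp (R₁ ∪ R₂) ∈ 𝔻 := hdOp_mem _ hR₁₂cu.1 hR₁₂cu.2
      have hR₃Q : dOp (R₁ ∪ R₂) ∉ Q := by
        intro h
        rcases hprime R₁ hR₁𝔻 R₂ hR₂𝔻 h with h' | h'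
        exacts [hR₁Q h', hR₂Q h']
      refine ⟨⟨(P₁ ∩ P₂, dOp (R₁ ∪ R₂)), hQ4 P₁ hP₁Q P₂ hP₂Q, hR₃𝔻, hR₃Q⟩, ?_, ?_⟩
      · rintro x ⟨⟨hxN, hxP⟩, hxR⟩
        refine ⟨⟨hxN, hxP.1⟩, fun hx => hxR ?_⟩
        exact subset_dOp hNd hR₁₂cu.1 hR₁₂cu.2 (Or.inl hx)
      · rintro x ⟨⟨hxN, hxP⟩, hxR⟩
        refine ⟨⟨hxN, hxP.2⟩, fun hx => hxR ?_⟩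
        exact subset_dOp hNd hR₁₂cu.1 hR₁₂cu.2 (Or.inr hx)
    have hZclosed : ∀ i, IsClosed (Z i) := by
      rintro ⟨⟨P, R⟩, hPQ, hR𝔻, hRQ⟩
      exact ((hN.1.inter (hQ2 hPQ).1.1.1)).inter (hR𝔻.1.1.2.isClosed_compl)
    obtain ⟨z, hz⟩ := IsCompact.nonempty_iInter_of_directed_nonempty_isCompact_isClosed
      Z hZdir hZne (fun i => (hZclosed i).isCompact) hZclosed
    have hzN : z ∈ N := by
      have := mem_iInter.1 hz ⟨(univ, ∅), hunivQ, hempty𝔻, hemptyQ⟩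
      exact this.1.1
    have hzQ : ∀ P ∈ Q, z ∈ P := by
      intro P hPQ
      have := mem_iInter.1 hz ⟨(P, ∅), hPQ, hempty𝔻, hemptyQ⟩
      exact this.1.2
    have hznQ : ∀ R ∈ 𝔻, R ∉ Q → z ∉ R := by
      intro R hR𝔻 hRQ
      have := mem_iInter.1 hz ⟨(univ, R), hunivQ, hR𝔻, hRQ⟩
      exact this.2
    -- z is in every member of C
    have hzC : ∀ W ∈ C, z ∈ W := by
      intro W hW
      have hWcu := hCcu W hW
      have hdOpWG : dOp W ∈ G := by
        refine ⟨hdOp_mem _ hWcu.1 hWcu.2, ∅, hempty𝔻, notMem_empty m, W, hW, ?_⟩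
        rw [union_empty, dOp_idem hP hN hNd hWcu.1 hWcu.2]
      have hzdW : z ∈ dOp W := hzQ _ (hQ1 hdOpWG)
      exact (mem_dOp_iff_of_N hNd hWcu.1 hWcu.2 hzN).1 hzdW
    -- z ≤ m
    have hzm : z ≤ m := by
      apply le_of_forall_clopen hP
      intro U hU1 hU2 hzU
      have hdU𝔻 : dOp U ∈ 𝔻 := hdOp_mem _ hU1 hU2
      have hdUQ : dOp U ∈ Q := by
        by_contra h
        exact (hznQ _ hdU𝔻 h) (subset_dOp hNd hU1 hU2 hzU)
      exact (mem_dOp_iff_of_N hNd hU1 hU2 hmN).1 (hQF _ hdUQ)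
    have hzeq : z = m := hm.2 z ⟨fun W hW => hzC W hW, hzN⟩ hzm
    -- final contradiction: m ∈ dOp A but dOp A ∉ Q
    have hmdA : m ∈ dOp A := subset_dOp hNd hA.1 hA.2 hmem
    have : z ∈ dOp A := hzeq ▸ hmdA
    exact (hznQ _ hdOpA𝔻 hdOpAQ) this
  -- final contradiction from claimG
  obtain ⟨-, B, hB, hmB, W, hW, hs⟩ := claimG
  have hAB := clopen_upper_union hA hB.1
  have step3 : dOp (dOp A ∪ B) = dOp (A ∪ B) :=
    dOp_absorb hP hN hNd hA.1 hA.2 hB.1.1 hB.1.2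
  rw [step3] at hs
  -- A ∪ B = closure (⋃₀ {D ∪ B | D ∈ 𝒟₀})
  set D0 : Set (Set X) := {D : Set X | (IsClopen D ∧ IsUpperSet D) ∧ D ∩ dwC {m} = ∅}
    with hD0def
  have hD0ne : D0.Nonempty :=
    ⟨∅, ⟨⟨isClopen_empty, fun a b _ h => absurd h (notMem_empty a)⟩, empty_inter _⟩⟩
  set D1 : Set (Set X) := {E : Set X | ∃ D ∈ D0, E = D ∪ B} with hD1def
  have hempty_D0 : (∅ : Set X) ∈ D0 :=
    ⟨⟨isClopen_empty, fun a b _ h => absurd h (notMem_empty a)⟩, empty_inter _⟩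
  have hD1ne : D1.Nonempty := ⟨∅ ∪ B, ∅, hempty_D0, rfl⟩
  have hD1cu : ∀ E ∈ D1, IsClopen E ∧ IsUpperSet E := by
    rintro E ⟨D, hD, rfl⟩
    exact clopen_upper_union hD.1 hB.1
  have hD1dir : ∀ E ∈ D1, ∀ E' ∈ D1, ∃ E'' ∈ D1, E ∪ E' ⊆ E'' := by
    rintro E ⟨D, hD, rfl⟩ E' ⟨D', hD', rfl⟩
    have hDD' : D ∪ D' ∈ D0 := by
      refine ⟨clopen_upper_union hD.1 hD'.1, ?_⟩
      rw [union_inter_distrib_right, hD.2, hD'.2, union_empty]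
    refine ⟨(D ∪ D') ∪ B, ⟨D ∪ D', hDD', rfl⟩, ?_⟩
    rintro x (⟨h | h⟩ | ⟨h | h⟩)
    exacts [Or.inl (Or.inl h), Or.inr h, Or.inl (Or.inr h), Or.inr h]
  have hUD1 : closure (⋃₀ D1) = A ∪ B := by
    have e1 : ⋃₀ D1 = (⋃₀ D0) ∪ B := by
      apply subset_antisymm
      · rintro x ⟨E, ⟨D, hD, rfl⟩, hx | hx⟩
        exacts [Or.inl ⟨D, hD, hx⟩, Or.inr hx]
      · rintro x (⟨D, hD, hx⟩ | hx)
        · exact ⟨D ∪ B, ⟨D, hD, rfl⟩, Or.inl hx⟩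
        · exact ⟨∅ ∪ B, ⟨∅, hempty_D0, rfl⟩, Or.inr hx⟩
    rw [e1, sUnion_D0 hP m, closure_union, hB.1.1.1.closure_eq]
  have hWcu := hCcu W hW
  have hWsub : W ⊆ dOp (closure (⋃₀ D1)) := by
    rw [hUD1]
    exact (subset_dOp hNd hWcu.1 hWcu.2).trans hs
  obtain ⟨E, ⟨D, hD, rfl⟩, hWD⟩ := sc hL hN hNd hD1ne hD1cu hD1dir (hCsub hW) hWsub
  have hDBcu := clopen_upper_union hD.1 hB.1
  have hmDB : m ∈ D ∪ B :=
    (mem_dOp_iff_of_N hNd hDBcu.1 hDBcu.2 hmN).1 (hWD (hmC W hW))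
  rcases hmDB with h | h
  · have hmd : m ∈ dwC ({m} : Set X) := ⟨m, rfl, le_refl m⟩
    exact absurd (mem_inter h hmd) (by rw [hD.2]; exact notMem_empty m)
  · exact hmB h

end MinLocalic

section Cors

variable {N : Set X} (hX : IsArithmeticLSpace X) (hN : IsNuclearSub N)
  (hNd : ∀ U : Set X, IsClopen U → IsUpperSet U → jN N U = dOp U)

include hX hN hNd in
lemma min_scott_localic {V : Set X} (hV : V ∈ ClopSUp X) {m : X}
    (hm : m ∈ minOf (V ∩ N)) : m ∈ localicPts X := by
  apply min_localic hX hN hNd (C := {V}) ⟨V, rfl⟩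
    (by rintro W rfl; exact hV) (by rintro A rfl B rfl; rw [inter_self]; rfl)
  rwa [sInter_singleton]

include hX hN hNd in
lemma coinitial_in_scott {V : Set X} (hV : V ∈ ClopSUp X) {x : X} (hx : x ∈ V ∩ N) :
    ∃ s : X, (s ∈ N ∧ s ∈ localicPts X) ∧ s ∈ V ∧ s ≤ x := by
  have hP : IsPriestley X := hX.1.1.1
  have hVN : IsClosed (V ∩ N) := hV.2.1.inter hN.1
  obtain ⟨m, hm, hmx⟩ := exists_min_below hP hVN hx
  exact ⟨m, ⟨hm.1.2, min_scott_localic hX hN hNd hV hm⟩, hm.1.1, hmx⟩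

include hX in
lemma biInter_scott_eq_upC {y : X} (hy : y ∈ localicPts X) :
    ⋂₀ {W : Set X | W ∈ ClopSUp X ∧ y ∈ W} = upC ({y} : Set X) := by
  have hP : IsPriestley X := hX.1.1.1
  apply subset_antisymm
  · intro z hz
    refine ⟨y, rfl, ?_⟩
    apply le_of_forall_clopen hP
    intro U hU1 hU2 hyU
    obtain ⟨W, hW, hyW, hWU⟩ := scott_nbhd hX hy hU1 hU2 hyU
    exact hWU (hz W ⟨hW, hyW⟩)
  · rintro z ⟨y', hy', hyz⟩ W ⟨hW, hyW⟩
    cases hy'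
    exact hW.2.2.1 hyz hyW

include hX hN hNd in
lemma between {t n : X} {W : Set X} (ht : t ∈ localicPts X) (hW : W ∈ ClopSUp X)
    (hnW : n ∈ W) (hnN : n ∈ N) (htn : t ≤ n) :
    ∃ m : X, m ∈ N ∧ m ∈ localicPts X ∧ t ≤ m ∧ m ∈ W := by
  have hP : IsPriestley X := hX.1.1.1
  set C : Set (Set X) := {E : Set X | ∃ W' ∈ ClopSUp X, t ∈ W' ∧ E = W' ∩ W} with hCdef
  have hCsub : C ⊆ ClopSUp X := by
    rintro E ⟨W', hW', htW', rfl⟩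
    exact ⟨hW'.1.inter hW.1, hX.2 W' W hW' hW⟩
  obtain ⟨W₀, hW₀, htW₀, _⟩ := scott_nbhd hX ht isClopen_univ
    (fun a b _ _ => trivial) (mem_univ t)
  have hCne : C.Nonempty := ⟨W₀ ∩ W, W₀, hW₀, htW₀, rfl⟩
  have hCinter : ∀ A ∈ C, ∀ B ∈ C, A ∩ B ∈ C := by
    rintro A ⟨W₁, hW₁, htW₁, rfl⟩ B ⟨W₂, hW₂, htW₂, rfl⟩
    refine ⟨W₁ ∩ W₂, ⟨hW₁.1.inter hW₂.1, hX.2 W₁ W₂ hW₁ hW₂⟩, ⟨htW₁, htW₂⟩, ?_⟩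
    ext x; simp only [mem_inter_iff]; tauto
  have hclosed : IsClosed ((⋂₀ C) ∩ N) := by
    refine IsClosed.inter (isClosed_sInter ?_) hN.1
    rintro E ⟨W', hW', htW', rfl⟩
    exact (hW'.1.inter hW.1).1
  have hnT : n ∈ (⋂₀ C) ∩ N := by
    refine ⟨?_, hnN⟩
    rintro E ⟨W', hW', htW', rfl⟩
    exact ⟨hW'.2.2.1 htn htW', hnW⟩
  obtain ⟨m, hm, hmn⟩ := exists_min_below hP hclosed hnT
  have hmY : m ∈ localicPts X := min_localic hX hN hNd hCne hCsub hCinter hm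
  have hmW : m ∈ W := by
    have := hm.1.1 (W₀ ∩ W) ⟨W₀, hW₀, htW₀, rfl⟩
    exact this.2
  have htm : t ≤ m := by
    have h1 : m ∈ ⋂₀ {W' : Set X | W' ∈ ClopSUp X ∧ t ∈ W'} := by
      rintro W' ⟨hW', htW'⟩
      exact (hm.1.1 (W' ∩ W) ⟨W', hW', htW', rfl⟩).1
    have := (biInter_scott_eq_upC hX ht).subset h1
    rcases this with ⟨t', ht', h⟩
    cases ht'
    exact h
  exact ⟨m, hm.1.2, hmY, htm, hmW⟩

include hX hN hNd in
lemma cofinal {y : X} (hy : y ∈ localicPts X) :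
    ∃ s : X, s ∈ N ∧ s ∈ localicPts X ∧ y ≤ s := by
  have hyn : y ∈ dwC N := by rw [dwC_N_univ (N := N) hNd]; trivial
  obtain ⟨n, hnN, hyn⟩ := hyn
  obtain ⟨W₀, hW₀, hyW₀, _⟩ := scott_nbhd hX hy isClopen_univ
    (fun a b _ _ => trivial) (mem_univ y)
  have hnW₀ : n ∈ W₀ := hW₀.2.2.1 hyn hyW₀
  obtain ⟨m, hmN, hmY, hym, _⟩ := between hX hN hNd hy hW₀ hnW₀ hnN hyn
  exact ⟨m, hmN, hmY, hym⟩

end Cors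

section Trace

lemma traceTop_basic_open {S : Set X} {U : Set X} (h1 : IsClopen U) (h2 : IsUpperSet U) :
    IsOpen[traceTop S] (Subtype.val ⁻¹' U : Set S) :=
  TopologicalSpace.isOpen_generateFrom_of_mem ⟨U, h1, h2, rfl⟩

lemma traceTop_open_elim {S : Set X} {O : Set S} (hO : IsOpen[traceTop S] O) :
    ∀ a ∈ O, ∃ U : Set X, IsClopen U ∧ IsUpperSet U ∧ a ∈ (Subtype.val ⁻¹' U : Set S) ∧
      (Subtype.val ⁻¹' U : Set S) ⊆ O := by
  have h : TopologicalSpace.GenerateOpen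
      {V : Set S | ∃ U : Set X, IsClopen U ∧ IsUpperSet U ∧ V = Subtype.val ⁻¹' U} O := hO
  clear hO
  induction h with
  | basic s hs =>
    obtain ⟨U, h1, h2, rfl⟩ := hs
    exact fun a ha => ⟨U, h1, h2, ha, subset_refl _⟩
  | univ =>
    intro a _
    exact ⟨univ, isClopen_univ, fun _ _ _ _ => trivial, mem_univ _, subset_univ _⟩
  | inter s t hs ht ihs iht =>
    intro a ha
    obtain ⟨U, hU1, hU2, haU, hUsub⟩ := ihs a ha.1
    obtain ⟨V, hV1, hV2, haV, hVsub⟩ := iht a ha.2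
    exact ⟨U ∩ V, hU1.inter hV1, hU2.inter hV2, ⟨haU, haV⟩,
      fun x hx => ⟨hUsub hx.1, hVsub hx.2⟩⟩
  | sUnion Sc hSc ih =>
    rintro a ⟨s, hs, has⟩
    obtain ⟨U, h1, h2, haU, hsub⟩ := ih s hs a has
    exact ⟨U, h1, h2, haU, hsub.trans (subset_sUnion_of_mem hs)⟩

lemma traceTop_open_upper {S : Set X} {O : Set S} (hO : IsOpen[traceTop S] O)
    {a b : S} (hab : (a : X) ≤ (b : X)) (ha : a ∈ O) : b ∈ O := by
  obtain ⟨U, h1, h2, haU, hsub⟩ := traceTop_open_elim hO a ha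
  exact hsub (h2 hab haU)

end Trace
end S13
/-- Let `X` be an arithmetic L-space and `N = N_d` the nuclear subset
whose nucleus `j_N` is the `d`-nucleus, with `Y_d = N_d ∩ Y`. TFAE:
(i) `Y_d` is an antichain;
(ii) `max Y = Y_d`;
(iii) `Y_d`, topologized so that its open sets are exactly the traces of the clopen
upsets of `X`, is a locally Stone space (zero-dimensional, locally compact, Hausdorff). -/
theorem statement13 (hX : IsArithmeticLSpace X)
    (N : Set X) (hN : IsNuclearSub N)
    (hNd : ∀ U : Set X, IsClopen U → IsUpperSet U → jN N U = dOp U) :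
    List.TFAE
      [IsAntichain (· ≤ ·) (N ∩ localicPts X),
       maxOf (localicPts X) = N ∩ localicPts X,
       (@TopologicalSpace.IsTopologicalBasis _ (traceTop (N ∩ localicPts X))
          {s : Set ↥(N ∩ localicPts X) | @IsClopen _ (traceTop (N ∩ localicPts X)) s} ∧
        @LocallyCompactSpace _ (traceTop (N ∩ localicPts X)) ∧
        @T2Space _ (traceTop (N ∩ localicPts X)))] := by
  classical
  have hL : IsLSpace X := hX.1.1
  have hP : IsPriestley X := hL.1
  have _ : CompactSpace X := hP.1
  tfae_have 2 → 1 := by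
    intro h2
    rw [← h2]
    rintro a ⟨haY, hamax⟩ b ⟨hbY, hbmax⟩ hne hab
    exact hne (hamax b hbY hab).symm
  tfae_have 1 → 2 := by
    intro h1
    ext y
    constructor
    · rintro ⟨hyY, hymax⟩
      obtain ⟨s, hsN, hsY, hys⟩ := S13.cofinal hX hN hNd hyY
      have hsy : s = y := hymax s hsY hys
      exact ⟨hsy ▸ hsN, hyY⟩
    · rintro ⟨hyN, hyY⟩
      refine ⟨hyY, ?_⟩
      intro z hzY hyz
      obtain ⟨t, htN, htY, hzt⟩ := S13.cofinal hX hN hNd hzY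
      have hyeqt : y = t := by
        by_contra hne
        exact h1 ⟨hyN, hyY⟩ ⟨htN, htY⟩ hne (hyz.trans hzt)
      exact le_antisymm (hyeqt ▸ hzt) hyz
  tfae_have 3 → 1 := by
    rintro ⟨-, -, hT2⟩
    rintro a haS b hbS hne hab
    letI tS : TopologicalSpace ↥(N ∩ localicPts X) := traceTop (N ∩ localicPts X)
    haveI : T2Space ↥(N ∩ localicPts X) := hT2
    have hpq : (⟨a, haS⟩ : ↥(N ∩ localicPts X)) ≠ ⟨b, hbS⟩ := by
      intro h
      exact hne (congrArg Subtype.val h)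
    obtain ⟨u, v, hu, hv, hpu, hqv, huv⟩ := t2_separation hpq
    have hbv : (⟨b, hbS⟩ : ↥(N ∩ localicPts X)) ∈ u :=
      S13.traceTop_open_upper hu hab hpu
    exact (Set.disjoint_left.1 huv hbv) hqv
  tfae_have 1 → 3 := by
    intro h1
    letI tS : TopologicalSpace ↥(N ∩ localicPts X) := traceTop (N ∩ localicPts X)
    have htrace : ∀ (W : Set X), IsClopen W → IsUpperSet W →
        (Subtype.val ⁻¹' (dOp W) : Set ↥(N ∩ localicPts X)) = Subtype.val ⁻¹' W := by
      intro W hW1 hW2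
      ext p
      exact S13.mem_dOp_iff_of_N hNd hW1 hW2 p.2.1
    -- traces of clopen Scott upsets are compact
    have hcomp : ∀ W ∈ ClopSUp X,
        IsCompact (Subtype.val ⁻¹' W : Set ↥(N ∩ localicPts X)) := by
      intro W hW
      apply isCompact_of_finite_subcover
      intro ι O hOopen hcov
      set A : Set (Set X) := {U : Set X | (IsClopen U ∧ IsUpperSet U) ∧
        ∃ i : ι, (Subtype.val ⁻¹' U : Set ↥(N ∩ localicPts X)) ⊆ O i} with hAdef
      have hXcov : W ∩ N ⊆ ⋃ j : {U : Set X // U ∈ A}, j.1 := by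
        intro x hx
        obtain ⟨s, ⟨hsN, hsY⟩, hsW, hsx⟩ := S13.coinitial_in_scott hX hN hNd hW
          ⟨hx.1, hx.2⟩
        have hsp : (⟨s, ⟨hsN, hsY⟩⟩ : ↥(N ∩ localicPts X)) ∈
            (Subtype.val ⁻¹' W : Set ↥(N ∩ localicPts X)) := hsW
        obtain ⟨i, hi⟩ := mem_iUnion.1 (hcov hsp)
        obtain ⟨U, hU1, hU2, hpU, hUsub⟩ := S13.traceTop_open_elim (hOopen i) _ hi
        exact mem_iUnion.2 ⟨⟨U, ⟨hU1, hU2⟩, i, hUsub⟩, hU2 hsx hpU⟩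
      have hWNcomp : IsCompact (W ∩ N) := (hW.2.1.inter hN.1).isCompact
      obtain ⟨t, ht⟩ := hWNcomp.elim_finite_subcover (fun j : {U : Set X // U ∈ A} => j.1)
        (fun j => j.2.1.1.isOpen) hXcov
      choose iof hiof using fun j : {U : Set X // U ∈ A} => j.2.2
      refine ⟨t.image iof, ?_⟩
      intro p hpW
      have hpx : (p : X) ∈ W ∩ N := ⟨hpW, p.2.1⟩
      obtain ⟨j, hjt, hpj⟩ := mem_iUnion₂.1 (ht hpx)
      exact mem_iUnion₂.2 ⟨iof j, Finset.mem_image_of_mem iof hjt, hiof j hpj⟩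
    -- basic compact-open neighborhoods
    have hnbhd : ∀ (p : ↥(N ∩ localicPts X)) (O : Set ↥(N ∩ localicPts X)),
        IsOpen O → p ∈ O → ∃ W ∈ ClopSUp X,
          p ∈ (Subtype.val ⁻¹' W : Set ↥(N ∩ localicPts X)) ∧
          IsOpen (Subtype.val ⁻¹' W : Set ↥(N ∩ localicPts X)) ∧
          (Subtype.val ⁻¹' W : Set ↥(N ∩ localicPts X)) ⊆ O := by
      intro p O hO hpO
      obtain ⟨U, hU1, hU2, hpU, hUsub⟩ := S13.traceTop_open_elim hO p hpO
      obtain ⟨W, hW, hpW, hWU⟩ := S13.scott_nbhd hX p.2.2 hU1 hU2 hpU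
      refine ⟨W, hW, hpW, ?_, fun x hx => hUsub (hWU hx)⟩
      rw [← htrace W hW.1 hW.2.2.1]
      exact S13.traceTop_basic_open
        (S13.dOp_clopen_upper hP hN hNd hW.1 hW.2.2.1).1
        (S13.dOp_clopen_upper hP hN hNd hW.1 hW.2.2.1).2
    -- T2
    have hT2 : @T2Space _ tS := by
      constructor
      intro p q hne
      have hab : (p : X) ≠ (q : X) := fun h => hne (Subtype.ext h)
      have hnab : ¬ (p : X) ≤ (q : X) := h1 p.2 q.2 hab
      have hqY : IsClopen (dwC ({(q : X)} : Set X)) := q.2.2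
      have hUc : IsClopen (dwC ({(q : X)} : Set X))ᶜ := hqY.compl
      have hUu : IsUpperSet (dwC ({(q : X)} : Set X))ᶜ := S13.dwC_lower.compl
      have hpU : (p : X) ∈ (dwC ({(q : X)} : Set X))ᶜ := by
        intro hd
        rcases hd with ⟨q', hq', hle⟩
        cases hq'
        exact hnab hle
      obtain ⟨W, hW, hpW, hWU⟩ := S13.scott_nbhd hX p.2.2 hUc hUu hpU
      have hWN : IsClopen (dwC (W ∩ N)) := hN.2 W hW.1
      refine ⟨Subtype.val ⁻¹' (dOp W), Subtype.val ⁻¹' (dwC (W ∩ N))ᶜ, ?_, ?_, ?_, ?_, ?_⟩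
      · exact S13.traceTop_basic_open
          (S13.dOp_clopen_upper hP hN hNd hW.1 hW.2.2.1).1
          (S13.dOp_clopen_upper hP hN hNd hW.1 hW.2.2.1).2
      · exact S13.traceTop_basic_open hWN.compl S13.dwC_lower.compl
      · exact S13.subset_dOp hNd hW.1 hW.2.2.1 hpW
      · -- q is not below any point of W ∩ N
        intro hd
        rcases hd with ⟨n, ⟨hnW, hnN⟩, hqn⟩
        obtain ⟨m, hmN, hmY, hqm, hmW⟩ := S13.between hX hN hNd q.2.2 hW hnW hnN hqn
        rcases eq_or_ne (q : X) m with heq | hne'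
        · exact (hWU (heq ▸ hmW)) ⟨(q : X), rfl, le_refl _⟩
        · exact h1 q.2 ⟨hmN, hmY⟩ hne' hqm
      · rw [Set.disjoint_left]
        intro x hx hx'
        have hxW : (x : X) ∈ W :=
          (S13.mem_dOp_iff_of_N hNd hW.1 hW.2.2.1 x.2.1).1 hx
        exact hx' (S13.subset_dwC ⟨hxW, x.2.1⟩)
    haveI : T2Space ↥(N ∩ localicPts X) := hT2
    refine ⟨?_, ?_, hT2⟩
    · apply TopologicalSpace.isTopologicalBasis_of_isOpen_of_nhds
      · exact fun u hu => hu.isOpen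
      · intro a u hau hu
        obtain ⟨W, hW, haW, hWopen, hWsub⟩ := hnbhd a u hu hau
        exact ⟨Subtype.val ⁻¹' W, ⟨(hcomp W hW).isClosed, hWopen⟩, haW, hWsub⟩
    · constructor
      intro p n hn
      obtain ⟨t', ht'sub, ht'open, hpt'⟩ := mem_nhds_iff.1 hn
      obtain ⟨W, hW, hpW, hWopen, hWsub⟩ := hnbhd p t' ht'open hpt'
      exact ⟨Subtype.val ⁻¹' W, hWopen.mem_nhds hpW, hWsub.trans ht'sub, hcomp W hW⟩
  tfae_finish
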